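/- Let d : S×A → ℝ satisfy d(s,a) > 0 for all (s,a) and Σ_{(s,a)} d(s,a) = 1. Then for every Q : S×A → ℝ, Σ_{(s0,a0,s1) ∈ S×A×S} d(s0,a0)·p(s1|s0,a0)·F(Q,d,(s0,a0,s1)) = H(Q), i.e., the average of F(Q,d,·) under the distribution ν(s0,a0,s1) = d(s0,a0)·p(s1|s0,a0) equals the Bellman operator applied to Q. -/

import Mathlib

/-- The Bellman operator of a finite MDP:
`[H(Q)](s,a) = R(s,a) + Σ_{s'} p(s'|s,a) · max_{a'} Q(s',a')`. -/
noncomputable def bellman {S A : Type*} [Fintype S] [Nonempty A]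
    (p : S × A → S → ℝ) (R : S × A → ℝ) (Q : S × A → ℝ) : S × A → ℝ :=
  fun sa => R sa + ∑ s' : S, p sa s' * ⨆ a' : A, Q (s', a')

/-- The importance-sampling corrected sample operator `F`: for `y = (s0, a0, s1)`,
`[F(Q,D̃,y)](s,a) = (1{(s0,a0)=(s,a)}/D̃(s,a))·(R(s0,a0) + max_{a'} Q(s1,a') - Q(s0,a0)) + Q(s,a)`. -/
noncomputable def Fop {S A : Type*} [Nonempty A] [DecidableEq S] [DecidableEq A]
    (R : S × A → ℝ) (Q : S × A → ℝ) (Dt : S × A → ℝ) (y : S × A × S) : S × A → ℝ :=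
  fun sa =>
    ((if (y.1, y.2.1) = sa then (1 : ℝ) else 0) / Dt sa) *
        (R (y.1, y.2.1) + (⨆ a' : A, Q (y.2.2, a')) - Q (y.1, y.2.1))
      + Q sa

/-- Averaging `F(Q,d,·)` under `ν(s0,a0,s1) = d(s0,a0)·p(s1|s0,a0)` gives exactly the
Bellman operator `H(Q)`. -/
theorem Fop_mean_eq_bellman {S A : Type*} [Fintype S] [Fintype A] [Nonempty S] [Nonempty A]
    [DecidableEq S] [DecidableEq A]
    (p : S × A → S → ℝ) (R : S × A → ℝ)
    (hp : ∀ sa s', 0 ≤ p sa s') (hp1 : ∀ sa, ∑ s' : S, p sa s' = 1)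
    (d : S × A → ℝ) (hd0 : ∀ sa, 0 < d sa) (hdsum : ∑ sa : S × A, d sa = 1) :
    ∀ (Q : S × A → ℝ) (sa : S × A),
      ∑ y : S × A × S, d (y.1, y.2.1) * p (y.1, y.2.1) y.2.2 * Fop (A := A) R Q d y sa
        = bellman p R Q sa := by
  intro Q sa
  have hd : d sa ≠ 0 := (hd0 sa).ne'
  simp only [Fop, bellman, mul_add, Finset.sum_add_distrib]
  have h2 : ∑ y : S × A × S, d (y.1, y.2.1) * p (y.1, y.2.1) y.2.2 * Q sa = Q sa := by
    rw [← Finset.sum_mul]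
    rw [show (∑ y : S × A × S, d (y.1, y.2.1) * p (y.1, y.2.1) y.2.2) = 1 from ?_, one_mul]
    rw [Fintype.sum_prod_type]
    simp only [Fintype.sum_prod_type]
    calc (∑ s0 : S, ∑ a0 : A, ∑ s1 : S, d (s0, a0) * p (s0, a0) s1)
        = ∑ s0 : S, ∑ a0 : A, d (s0, a0) := by
          refine Finset.sum_congr rfl fun s0 _ => Finset.sum_congr rfl fun a0 _ => ?_
          rw [← Finset.mul_sum, hp1, mul_one]
      _ = 1 := by rw [← Fintype.sum_prod_type]; exact hdsum
  rw [h2]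
  have h1 : ∑ y : S × A × S,
      d (y.1, y.2.1) * p (y.1, y.2.1) y.2.2 *
        ((if (y.1, y.2.1) = sa then (1:ℝ) else 0) / d sa *
          (R (y.1, y.2.1) + (⨆ a' : A, Q (y.2.2, a')) - Q (y.1, y.2.1)))
      = R sa + (∑ s1 : S, p sa s1 * ⨆ a' : A, Q (s1, a')) - Q sa := by
    simp only [Fintype.sum_prod_type]
    rw [Finset.sum_eq_single sa.1]
    · rw [Finset.sum_eq_single sa.2]
      · have : (sa.1, sa.2) = sa := Prod.mk.eta
        simp only [this, eq_self_iff_true, if_true]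
        rw [show (∑ s1 : S, d sa * p sa s1 * (1 / d sa * (R sa + (⨆ a' : A, Q (s1, a')) - Q sa)))
            = ∑ s1 : S, p sa s1 * (R sa + (⨆ a' : A, Q (s1, a')) - Q sa) from
            Finset.sum_congr rfl fun s1 _ => by field_simp]
        simp only [mul_sub, mul_add, Finset.sum_add_distrib, Finset.sum_sub_distrib,
          ← Finset.sum_mul, hp1, one_mul]
      · intro a0 _ hne
        have : (sa.1, a0) ≠ sa := by
          intro h; apply hne; rw [← h]
        simp [this]
      · simp
    · intro s0 _ hne
      have : ∀ a0 : A, (s0, a0) ≠ sa := by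
        intro a0 h; apply hne; rw [← h]
      simp [this]
    · simp
  rw [h1]; ring
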